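/- Define sequences by q_{-1}=q'_{-1}=0, q_0=q'_0=1, q_1=3, q'_1=28, and inductively a_{k+1} = ((q_k)^6 + q_{k-1} − 1)b'_k + (q_k)^5, q_{k+1}=a_{k+1}q_k+q_{k-1}, b_{k+1}=(q_k)^6+q_{k-1}−1, a'_{k+1}=((q'_k)^6+q'_{k-1}−1)b_{k+1}+(q'_k)^5, q'_{k+1}=a'_{k+1}q'_k+q'_{k-1}, b'_{k+1}=(q'_k)^6+q'_{k-1}−1, with b'_1=9. Then for all k ≥ 1: q'_k = b'_k q_k + 1 and q_{k+1} = b_{k+1} q'_k + 1. -/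
import Mathlib


theorem construction_satisfies_relations (a a' b b' q q' : ℕ → ℤ)
    (hq0 : q 0 = 1) (hq1 : q 1 = 3) (hq'0 : q' 0 = 1) (hq'1 : q' 1 = 28) (hb'1 : b' 1 = 9)
    (ha : ∀ k, 1 ≤ k → a (k + 1) = ((q k) ^ 6 + q (k - 1) - 1) * b' k + (q k) ^ 5)
    (hq : ∀ k, 1 ≤ k → q (k + 1) = a (k + 1) * q k + q (k - 1))
    (hb : ∀ k, 1 ≤ k → b (k + 1) = (q k) ^ 6 + q (k - 1) - 1)
    (ha' : ∀ k, 1 ≤ k → a' (k + 1) = ((q' k) ^ 6 + q' (k - 1) - 1) * b (k + 1) + (q' k) ^ 5)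
    (hq' : ∀ k, 1 ≤ k → q' (k + 1) = a' (k + 1) * q' k + q' (k - 1))
    (hb' : ∀ k, 1 ≤ k → b' (k + 1) = (q' k) ^ 6 + q' (k - 1) - 1) :
    ∀ k, 1 ≤ k → q' k = b' k * q k + 1 ∧ q (k + 1) = b (k + 1) * q' k + 1 := by
  refine Nat.le_induction ?_ ?_
  · constructor
    · rw [hq'1, hb'1, hq1]; norm_num
    · rw [hq 1 le_rfl, ha 1 le_rfl, hb 1 le_rfl]
      simp only [Nat.sub_self]
      rw [hq1, hq0, hq'1, hb'1]; norm_num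
  · rintro n hn ⟨ih1, ih2⟩
    have hn1 : 1 ≤ n + 1 := by omega
    have h1 : q' (n + 1) = b' (n + 1) * q (n + 1) + 1 := by
      have e1 := hq' n hn
      have e2 := ha' n hn
      have e3 := hb' n hn
      rw [e2] at e1
      rw [e1, e3, ih2]
      ring
    refine ⟨h1, ?_⟩
    have e1 := hq (n + 1) hn1
    have e2 := ha (n + 1) hn1
    have e3 := hb (n + 1) hn1
    simp only [Nat.add_sub_cancel] at e1 e2 e3
    rw [e2] at e1
    rw [e1, e3, h1]
    ring
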